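/- Let X_1,…,X_n be drawn from a product distribution on 𝒳^n and let M be a k-pass streaming algorithm with private randomness R. Then for all j ∈ [n]: (i) for all i ∈ {0,1,…,k-1}, I(X_{[1,j]}, R_{(≤k,[1,j])}; X_{[j+1,n]}, R_{(≤k,[j+1,n])} | M_{≤i}, M_{(≤i+1,j)}) = 0; and (ii) for all i ∈ {0,1,…,k}, I(X_{[1,j]}, R_{(≤k,[1,j])}; X_{[j+1,n]}, R_{(≤k,[j+1,n])} | M_{≤i}, M_{(≤i,j)}) = 0. -/
import Mathlib


open scoped Classical
open Finset

noncomputable section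

namespace MultiPassIC

/-- Probability of an event under a probability mass function `p` on a finite sample space. -/
def pr {Ω : Type} [Fintype Ω] (p : Ω → ℝ) (E : Ω → Prop) : ℝ :=
  ∑ ω, if E ω then p ω else 0

/-- `p` is a probability mass function on the finite type `Ω`. -/
structure IsPMF {Ω : Type} [Fintype Ω] (p : Ω → ℝ) : Prop where
  nonneg : ∀ ω, 0 ≤ p ω
  sum_one : ∑ ω, p ω = 1

/-- Shannon entropy (base 2) of the random variable `A` under `p`. -/
def H {Ω : Type} [Fintype Ω] {α : Type} [Fintype α] (p : Ω → ℝ) (A : Ω → α) : ℝ :=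
  -∑ a, pr p (fun ω => A ω = a) * Real.logb 2 (pr p (fun ω => A ω = a))

/-- Conditional mutual information `I(A ; B ∣ C)` (base 2), with the usual conventions
for vanishing probabilities. -/
def condMI {Ω : Type} [Fintype Ω] {α β γ : Type} [Fintype α] [Fintype β] [Fintype γ]
    (p : Ω → ℝ) (A : Ω → α) (B : Ω → β) (C : Ω → γ) : ℝ :=
  ∑ a, ∑ b, ∑ c,
    pr p (fun ω => A ω = a ∧ B ω = b ∧ C ω = c) *
      Real.logb 2 ((pr p (fun ω => C ω = c) *
          pr p (fun ω => A ω = a ∧ B ω = b ∧ C ω = c)) /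
        (pr p (fun ω => A ω = a ∧ C ω = c) * pr p (fun ω => B ω = b ∧ C ω = c)))

/-- Mutual information `I(A ; B)` (base 2). -/
def MI {Ω : Type} [Fintype Ω] {α β : Type} [Fintype α] [Fintype β]
    (p : Ω → ℝ) (A : Ω → α) (B : Ω → β) : ℝ :=
  condMI p A B (fun _ => (0 : Fin 1))

/-- `X 0, …, X (n-1)` (the first `n` stream elements) are mutually independent under `p`,
i.e. they are drawn from a product distribution. -/
def IsProduct {Ω : Type} [Fintype Ω] {𝒳 : Type} (p : Ω → ℝ) (n : ℕ) (X : ℕ → Ω → 𝒳) : Prop :=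
  ∀ x : ℕ → 𝒳,
    pr p (fun ω => ∀ j < n, X j ω = x j) =
      ∏ j ∈ Finset.range n, pr p (fun ω => X j ω = x j)

/-- A `k`-pass streaming algorithm on the input stream `X 0, …, X (n-1)` (0-indexed;
the paper's `X_j` is `X (j-1)`), over a finite sample space `Ω` with pmf `p`.
`S` is the finite set of memory states, `Rv` the value space of the per-step private
randomness, `init` the initial memory state `M₀`, `R i j` the private randomness used at
step `j` of pass `i` (0-indexed), and `f i j` the corresponding transition function.
The field `indep` states that the initial state, all the per-step random seeds, and the
input stream are mutually independent. -/
structure Alg (Ω : Type) [Fintype Ω] (p : Ω → ℝ) (𝒳 : Type) [Fintype 𝒳]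
    (n k : ℕ) (X : ℕ → Ω → 𝒳) where
  S : Type
  fintS : Fintype S
  Rv : Type
  fintR : Fintype Rv
  init : Ω → S
  R : ℕ → ℕ → Ω → Rv
  f : ℕ → ℕ → 𝒳 → S → Rv → S
  indep : ∀ (m : S) (r : ℕ → ℕ → Rv) (x : ℕ → 𝒳),
    pr p (fun ω => init ω = m ∧ (∀ i < k, ∀ j < n, R i j ω = r i j) ∧ (∀ j < n, X j ω = x j))
      = pr p (fun ω => init ω = m)
        * (∏ i ∈ Finset.range k, ∏ j ∈ Finset.range n, pr p (fun ω => R i j ω = r i j))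
        * pr p (fun ω => ∀ j < n, X j ω = x j)

attribute [instance] Alg.fintS Alg.fintR

variable {Ω : Type} [Fintype Ω] {p : Ω → ℝ} {𝒳 : Type} [Fintype 𝒳] {n k : ℕ} {X : ℕ → Ω → 𝒳}

/-- Running pass `i` (0-indexed) of the algorithm for `j` steps starting from `ini`. -/
def Alg.runPass (M : Alg Ω p 𝒳 n k X) (i : ℕ) (ini : Ω → M.S) : ℕ → Ω → M.S
  | 0 => ini
  | j + 1 => fun ω =>
      if j < n ∧ i < k then
        M.f i j (X j ω) (M.runPass i ini j ω) (M.R i j ω)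
      else M.runPass i ini j ω

/-- `M.passEnd i` is the memory state at the end of pass `i`; `M.passEnd 0 = M₀` is the
initial state, and `M.passEnd i` is the paper's `M_i = M_{(i,n)}`. -/
def Alg.passEnd (M : Alg Ω p 𝒳 n k X) : ℕ → Ω → M.S
  | 0 => M.init
  | i + 1 => M.runPass i (M.passEnd i) n

/-- `M.st i j` is the memory state after reading `j` elements in pass `i+1`;
it is the paper's `M_{(i+1, j)}`. -/
def Alg.st (M : Alg Ω p 𝒳 n k X) (i j : ℕ) : Ω → M.S :=
  M.runPass i (M.passEnd i) j

/-- The multi-pass information cost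
`MIC(M, μ) = Σ_{i=1}^{k} Σ_{j=1}^{n} Σ_{ℓ=1}^{j} I(M_{(i,j)}; X_ℓ | M_{(≤i,ℓ-1)}, M_{(≤i-1,j)})
  + Σ_{i=1}^{k} Σ_{j=1}^{n} Σ_{ℓ=j+1}^{n} I(M_{(i,j)}; X_ℓ | M_{(≤i-1,ℓ-1)}, M_{(≤i-1,j)})`
(all summation indices below are 0-indexed shifts of the paper's 1-indexed ones). -/
def Alg.MIC (M : Alg Ω p 𝒳 n k X) : ℝ :=
  (∑ i ∈ Finset.range k, ∑ j ∈ Finset.range n, ∑ l ∈ Finset.range (j + 1),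
    condMI p (M.st i (j + 1)) (X l)
      (fun ω => ((fun r : Fin (i + 1) => M.st r.1 l ω),
                 (fun r : Fin i => M.st r.1 (j + 1) ω))))
  + (∑ i ∈ Finset.range k, ∑ j ∈ Finset.range n, ∑ l ∈ Finset.Ico (j + 1) n,
    condMI p (M.st i (j + 1)) (X l)
      (fun ω => ((fun r : Fin i => M.st r.1 l ω),
                 (fun r : Fin i => M.st r.1 (j + 1) ω))))

/-- The conditional information cost
`MIC_cond(M, μ) = Σ_{j=1}^{n} Σ_{ℓ=1}^{j} I(M_{(≤k,j)}; X_ℓ | M_{<k}, M_{(≤k,ℓ-1)})`. -/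
def Alg.MICcond (M : Alg Ω p 𝒳 n k X) : ℝ :=
  ∑ j ∈ Finset.range n, ∑ l ∈ Finset.range (j + 1),
    condMI p (fun ω => fun r : Fin k => M.st r.1 (j + 1) ω) (X l)
      (fun ω => ((fun r : Fin k => M.passEnd r.1 ω),
                 (fun r : Fin k => M.st r.1 l ω)))



variable {Ω : Type} [Fintype Ω] {p : Ω → ℝ} {𝒳 : Type} [Fintype 𝒳] {n k : ℕ} {X : ℕ → Ω → 𝒳}

lemma pr_congr {p : Ω → ℝ} {E F : Ω → Prop} (h : ∀ ω, E ω ↔ F ω) :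
    pr p E = pr p F :=
  Finset.sum_congr rfl fun ω _ => by simp [h ω]

lemma pr_total {β : Type} [Fintype β] (p : Ω → ℝ) (E : Ω → Prop)
    (B : Ω → β) : pr p E = ∑ b, pr p (fun ω => E ω ∧ B ω = b) := by
  unfold pr
  rw [Finset.sum_comm]
  refine Finset.sum_congr rfl fun ω _ => ?_
  by_cases h : E ω <;> simp [h]

lemma pr_const_and (p : Ω → ℝ) (Q : Prop) (E : Ω → Prop) :
    pr p (fun ω => Q ∧ E ω) = if Q then pr p E else 0 := by
  by_cases hq : Q <;> simp [pr, hq]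

lemma condMI_eq_zero_of_factor {α β γ : Type}
    [Fintype α] [Fintype β] [Fintype γ]
    (p : Ω → ℝ) (A : Ω → α) (B : Ω → β) (C : Ω → γ)
    (F1 : α → γ → ℝ) (F2 : β → γ → ℝ)
    (h : ∀ a b c, pr p (fun ω => A ω = a ∧ B ω = b ∧ C ω = c) = F1 a c * F2 b c) :
    condMI p A B C = 0 := by
  have hAC : ∀ a c, pr p (fun ω => A ω = a ∧ C ω = c) = F1 a c * ∑ b', F2 b' c := by
    intro a c
    rw [pr_total p _ B, Finset.mul_sum]
    refine Finset.sum_congr rfl fun b' _ => ?_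
    rw [← h a b' c]
    exact pr_congr fun ω => by tauto
  have hBC : ∀ b c, pr p (fun ω => B ω = b ∧ C ω = c) = (∑ a', F1 a' c) * F2 b c := by
    intro b c
    rw [pr_total p _ A, Finset.sum_mul]
    refine Finset.sum_congr rfl fun a' _ => ?_
    rw [← h a' b c]
    exact pr_congr fun ω => by tauto
  have hC : ∀ c, pr p (fun ω => C ω = c) = (∑ a', F1 a' c) * ∑ b', F2 b' c := by
    intro c
    rw [pr_total p _ A, Finset.sum_mul]
    refine Finset.sum_congr rfl fun a' _ => ?_
    rw [← hAC a' c]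
    exact pr_congr fun ω => by tauto
  have key : ∀ a b c,
      pr p (fun ω => C ω = c) * pr p (fun ω => A ω = a ∧ B ω = b ∧ C ω = c)
        = pr p (fun ω => A ω = a ∧ C ω = c) * pr p (fun ω => B ω = b ∧ C ω = c) := by
    intro a b c
    rw [h, hAC, hBC, hC]
    ring
  unfold condMI
  refine Finset.sum_eq_zero fun a _ => Finset.sum_eq_zero fun b _ =>
    Finset.sum_eq_zero fun c _ => ?_
  rw [key a b c]
  rcases eq_or_ne (pr p (fun ω => A ω = a ∧ C ω = c) * pr p (fun ω => B ω = b ∧ C ω = c)) 0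
    with hz | hz
  · rw [hz]; simp
  · rw [div_self hz]; simp

/-- Pure simulator of one pass of the algorithm, running `t` steps starting at absolute
position `j0`, where `x s` / `rv s` are the input symbol / random seed at absolute
position `j0 + s`. -/
def Alg.simFrom (M : Alg Ω p 𝒳 n k X) (i j0 : ℕ) (x : ℕ → 𝒳) (rv : ℕ → M.Rv) :
    ℕ → M.S → M.S
  | 0, m => m
  | t + 1, m => if j0 + t < n ∧ i < k then
      M.f i (j0 + t) (x t) (M.simFrom i j0 x rv t m) (rv t)
    else M.simFrom i j0 x rv t m

lemma Alg.runPass_eq_simFrom (M : Alg Ω p 𝒳 n k X) (i : ℕ) (ini : Ω → M.S) (ω : Ω) :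
    ∀ t, M.runPass i ini t ω
      = M.simFrom i 0 (fun l => X l ω) (fun l => M.R i l ω) t (ini ω)
  | 0 => rfl
  | t + 1 => by
    simp only [Alg.runPass, Alg.simFrom, Nat.zero_add,
      M.runPass_eq_simFrom i ini ω t]

lemma Alg.simFrom_shift (M : Alg Ω p 𝒳 n k X) (i j0 : ℕ) (x : ℕ → 𝒳) (rv : ℕ → M.Rv)
    (m : M.S) : ∀ t, M.simFrom i 0 x rv (j0 + t) m
      = M.simFrom i j0 (fun s => x (j0 + s)) (fun s => rv (j0 + s)) t
          (M.simFrom i 0 x rv j0 m)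
  | 0 => rfl
  | t + 1 => by
    show M.simFrom i 0 x rv ((j0 + t) + 1) m = _
    simp only [Alg.simFrom, Nat.zero_add, M.simFrom_shift i j0 x rv m t]

lemma Alg.simFrom_congr (M : Alg Ω p 𝒳 n k X) (i j0 : ℕ) {x x' : ℕ → 𝒳}
    {rv rv' : ℕ → M.Rv} (m : M.S) :
    ∀ t, (∀ s < t, x s = x' s) → (∀ s < t, rv s = rv' s) →
      M.simFrom i j0 x rv t m = M.simFrom i j0 x' rv' t m
  | 0, _, _ => rfl
  | t + 1, hx, hr => by
    simp only [Alg.simFrom,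
      M.simFrom_congr i j0 m t (fun s hs => hx s (hs.trans (Nat.lt_succ_self t)))
        (fun s hs => hr s (hs.trans (Nat.lt_succ_self t))),
      hx t (Nat.lt_succ_self t), hr t (Nat.lt_succ_self t)]


/-- Extend a `Fin j`-indexed vector to `ℕ` with a default value. -/
def extFin {τ : Type} (j : ℕ) (d : τ) (v : Fin j → τ) : ℕ → τ :=
  fun l => if h : l < j then v ⟨l, h⟩ else d

/-- Extend a doubly-indexed vector to `ℕ → ℕ` with a default value. -/
def extFin2 {τ : Type} (k j : ℕ) (d : τ) (v : Fin k → Fin j → τ) : ℕ → ℕ → τ :=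
  fun i l => if h : i < k ∧ l < j then v ⟨i, h.1⟩ ⟨l, h.2⟩ else d

lemma indep_key
    (hp : IsPMF p) (hprod : IsProduct p n X) (M : Alg Ω p 𝒳 n k X)
    (j : ℕ) (hj1 : 1 ≤ j) (hjn : j ≤ n)
    (a1 a2 : ℕ) (h1 : 0 < a1) (h12 : a2 ≤ a1) (h21 : a1 ≤ a2 + 1) (h2k : a2 ≤ k) :
    condMI p
      (fun ω => ((fun r : Fin j => X r.1 ω),
                 (fun (i' : Fin k) (r : Fin j) => M.R i'.1 r.1 ω)))
      (fun ω => ((fun r : Fin (n - j) => X (j + r.1) ω),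
                 (fun (i' : Fin k) (r : Fin (n - j)) => M.R i'.1 (j + r.1) ω)))
      (fun ω => ((fun r : Fin a1 => M.passEnd r.1 ω),
                 (fun r : Fin a2 => M.st r.1 j ω))) = 0 := by
  -- the sample space is nonempty, giving default values
  have hΩ : Nonempty Ω := by
    by_contra hne
    rw [not_nonempty_iff] at hne
    have hs := hp.sum_one
    rw [Finset.univ_eq_empty, Finset.sum_empty] at hs
    exact one_ne_zero hs.symm
  obtain ⟨ω0⟩ := hΩ
  set xd : 𝒳 := X 0 ω0 with hxd
  set rd : M.Rv := M.R 0 0 ω0 with hrd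
  set A : Ω → (Fin j → 𝒳) × (Fin k → Fin j → M.Rv) :=
    fun ω => ((fun r : Fin j => X r.1 ω), (fun i' r => M.R i'.1 r.1 ω)) with hAdef
  set B : Ω → (Fin (n - j) → 𝒳) × (Fin k → Fin (n - j) → M.Rv) :=
    fun ω => ((fun r : Fin (n - j) => X (j + r.1) ω),
              (fun i' r => M.R i'.1 (j + r.1) ω)) with hBdef
  set C : Ω → (Fin a1 → M.S) × (Fin a2 → M.S) :=
    fun ω => ((fun r : Fin a1 => M.passEnd r.1 ω),
              (fun r : Fin a2 => M.st r.1 j ω)) with hCdef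
  -- past / future simulators
  set G : ℕ → (Fin j → 𝒳) × (Fin k → Fin j → M.Rv) → M.S → M.S :=
    fun r a m => M.simFrom r 0 (extFin j xd a.1) (fun l => extFin2 k j rd a.2 r l) j m
    with hGdef
  set Hs : ℕ → (Fin (n - j) → 𝒳) × (Fin k → Fin (n - j) → M.Rv) → M.S → M.S :=
    fun r b m => M.simFrom r j (extFin (n - j) xd b.1)
      (fun l => extFin2 k (n - j) rd b.2 r l) (n - j) m with hHdef
  have hG : ∀ (ω : Ω) (r : ℕ), r < k → M.st r j ω = G r (A ω) (M.passEnd r ω) := by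
    intro ω r hrk
    have h0 : M.st r j ω
        = M.simFrom r 0 (fun l => X l ω) (fun l => M.R r l ω) j (M.passEnd r ω) :=
      M.runPass_eq_simFrom r (M.passEnd r) ω j
    rw [h0, hGdef]
    exact M.simFrom_congr r 0 _ j
      (fun s hs => by simp [hAdef, extFin, hs])
      (fun s hs => by simp [hAdef, extFin2, hs, hrk])
  have hH : ∀ (ω : Ω) (r : ℕ), r < k →
      M.passEnd (r + 1) ω = Hs r (B ω) (M.st r j ω) := by
    intro ω r hrk
    have hn : j + (n - j) = n := by omega
    have hshift := M.simFrom_shift r j (fun l => X l ω) (fun l => M.R r l ω)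
      (M.passEnd r ω) (n - j)
    rw [hn] at hshift
    have e3 : M.simFrom r 0 (fun l => X l ω) (fun l => M.R r l ω) j (M.passEnd r ω)
        = M.st r j ω := (M.runPass_eq_simFrom r (M.passEnd r) ω j).symm
    rw [e3] at hshift
    have e1 : M.passEnd (r + 1) ω
        = M.simFrom r 0 (fun l => X l ω) (fun l => M.R r l ω) n (M.passEnd r ω) :=
      M.runPass_eq_simFrom r (M.passEnd r) ω n
    rw [e1, hshift, hHdef]
    exact M.simFrom_congr r j (M.st r j ω) (n - j)
      (fun s hs => by simp [hBdef, extFin, hs])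
      (fun s hs => by simp [hBdef, extFin2, hs, hrk])
  -- the conditioning variable as a function of (A, B, init)
  have hCiff : ∀ (ω : Ω) (c : (Fin a1 → M.S) × (Fin a2 → M.S)),
      C ω = c ↔ (M.init ω = c.1 ⟨0, h1⟩
        ∧ (∀ r : Fin a2, G r.1 (A ω) (c.1 ⟨r.1, lt_of_lt_of_le r.2 h12⟩) = c.2 r)
        ∧ (∀ (r : ℕ) (hr : r + 1 < a1),
            Hs r (B ω) (c.2 ⟨r, Nat.lt_of_succ_lt_succ (lt_of_lt_of_le hr h21)⟩) = c.1 ⟨r + 1, hr⟩)) := by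
    intro ω c
    obtain ⟨c1, c2⟩ := c
    constructor
    · intro hc
      rw [← hc]
      simp only [hCdef]
      refine ⟨rfl, ?_, ?_⟩
      · intro r
        exact (hG ω r.1 (lt_of_lt_of_le r.2 h2k)).symm
      · intro r hr
        have hrk : r < k := by omega
        exact (hH ω r hrk).symm
    · rintro ⟨h0, hq1, hq2⟩
      have hPE : ∀ r (hr : r < a1), M.passEnd r ω = c1 ⟨r, hr⟩ := by
        intro r
        induction r with
        | zero => intro hr; exact h0
        | succ r ih =>
          intro hr
          have hr2 : r < a2 := by omega
          have hrk : r < k := lt_of_lt_of_le hr2 h2k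
          have hr1 : r < a1 := by omega
          rw [hH ω r hrk]
          have hst : M.st r j ω = c2 ⟨r, hr2⟩ := by
            rw [hG ω r hrk, ih hr1]
            exact hq1 ⟨r, hr2⟩
          rw [hst]
          exact hq2 r hr
      simp only [hCdef, Prod.mk.injEq]
      constructor
      · funext r
        have h := hPE r.1 r.2
        simpa using h
      · funext r
        have hrk : r.1 < k := lt_of_lt_of_le r.2 h2k
        rw [hG ω r.1 hrk, hPE r.1 (lt_of_lt_of_le r.2 h12)]
        have h := hq1 r
        simpa using h
  -- apply the factorization criterion
  refine condMI_eq_zero_of_factor p A B C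
    (fun a c => if (∀ r : Fin a2, G r.1 a (c.1 ⟨r.1, lt_of_lt_of_le r.2 h12⟩) = c.2 r) then
        pr p (fun ω => M.init ω = c.1 ⟨0, h1⟩)
          * (∏ l ∈ Finset.range j, pr p (fun ω => X l ω = extFin j xd a.1 l))
          * (∏ i' ∈ Finset.range k, ∏ l ∈ Finset.range j,
              pr p (fun ω => M.R i' l ω = extFin2 k j rd a.2 i' l))
      else 0)
    (fun b c => if (∀ (r : ℕ) (hr : r + 1 < a1),
          Hs r b (c.2 ⟨r, Nat.lt_of_succ_lt_succ (lt_of_lt_of_le hr h21)⟩) = c.1 ⟨r + 1, hr⟩) then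
        (∏ l ∈ Finset.range (n - j), pr p (fun ω => X (j + l) ω = extFin (n - j) xd b.1 l))
          * (∏ i' ∈ Finset.range k, ∏ l ∈ Finset.range (n - j),
              pr p (fun ω => M.R i' (j + l) ω = extFin2 k (n - j) rd b.2 i' l))
      else 0)
    ?_
  intro a b c
  -- combined data streams
  set ξ : ℕ → 𝒳 := fun l => if h : l < j then a.1 ⟨l, h⟩
      else if h2 : l - j < n - j then b.1 ⟨l - j, h2⟩ else xd with hξ
  set ρ : ℕ → ℕ → M.Rv := fun i' l => if hi : i' < k then
      (if h2 : l < j then a.2 ⟨i', hi⟩ ⟨l, h2⟩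
       else if h3 : l - j < n - j then b.2 ⟨i', hi⟩ ⟨l - j, h3⟩ else rd) else rd with hρ
  have hev : ∀ ω : Ω, (A ω = a ∧ B ω = b ∧ C ω = c) ↔
      (((∀ r : Fin a2, G r.1 a (c.1 ⟨r.1, lt_of_lt_of_le r.2 h12⟩) = c.2 r)
          ∧ (∀ (r : ℕ) (hr : r + 1 < a1),
              Hs r b (c.2 ⟨r, Nat.lt_of_succ_lt_succ (lt_of_lt_of_le hr h21)⟩) = c.1 ⟨r + 1, hr⟩))
        ∧ (M.init ω = c.1 ⟨0, h1⟩
            ∧ (∀ i' < k, ∀ l < n, M.R i' l ω = ρ i' l)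
            ∧ (∀ l < n, X l ω = ξ l))) := by
    intro ω
    constructor
    · rintro ⟨hA, hB, hC⟩
      obtain ⟨h0, hq1, hq2⟩ := (hCiff ω c).mp hC
      rw [hA] at hq1
      rw [hB] at hq2
      refine ⟨⟨hq1, hq2⟩, h0, ?_, ?_⟩
      · intro i' hi l hl
        by_cases hlj : l < j
        · have e : M.R i' l ω = (A ω).2 ⟨i', hi⟩ ⟨l, hlj⟩ := rfl
          rw [e, hA]
          simp [hρ, hi, hlj]
        · have hrel : l - j < n - j := by omega
          have hl2 : j + (l - j) = l := by omega
          have e : (B ω).2 ⟨i', hi⟩ ⟨l - j, hrel⟩ = M.R i' l ω := by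
            simp only [hBdef]
            rw [hl2]
          rw [← e, hB]
          simp [hρ, hi, hlj, hrel]
      · intro l hl
        by_cases hlj : l < j
        · have e : X l ω = (A ω).1 ⟨l, hlj⟩ := rfl
          rw [e, hA]
          simp [hξ, hlj]
        · have hrel : l - j < n - j := by omega
          have hl2 : j + (l - j) = l := by omega
          have e : (B ω).1 ⟨l - j, hrel⟩ = X l ω := by
            simp only [hBdef]
            rw [hl2]
          rw [← e, hB]
          simp [hξ, hlj, hrel]
    · rintro ⟨⟨hq1, hq2⟩, h0, hR, hX⟩
      have hA : A ω = a := by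
        have e1 : (A ω).1 = a.1 := funext fun r => by
          have h := hX r.1 (lt_of_lt_of_le r.2 hjn)
          simpa [hAdef, hξ, r.2] using h
        have e2 : (A ω).2 = a.2 := funext fun i' => funext fun r => by
          have h := hR i'.1 i'.2 r.1 (lt_of_lt_of_le r.2 hjn)
          simpa [hAdef, hρ, i'.2, r.2] using h
        exact Prod.ext e1 e2
      have hB : B ω = b := by
        have e1 : (B ω).1 = b.1 := funext fun r => by
          have hlt : j + r.1 < n := by omega
          have h := hX (j + r.1) hlt
          have hnlt : ¬ (j + r.1 < j) := by omega
          have hsub : j + r.1 - j = r.1 := by omega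
          simpa [hBdef, hξ, hnlt, hsub, r.2] using h
        have e2 : (B ω).2 = b.2 := funext fun i' => funext fun r => by
          have hlt : j + r.1 < n := by omega
          have h := hR i'.1 i'.2 (j + r.1) hlt
          have hnlt : ¬ (j + r.1 < j) := by omega
          have hsub : j + r.1 - j = r.1 := by omega
          simpa [hBdef, hρ, i'.2, hnlt, hsub, r.2] using h
        exact Prod.ext e1 e2
      refine ⟨hA, hB, (hCiff ω c).mpr ⟨h0, ?_, ?_⟩⟩
      · rw [hA]; exact hq1
      · rw [hB]; exact hq2
  rw [pr_congr hev, pr_const_and, M.indep (c.1 ⟨0, h1⟩) ρ ξ, hprod ξ]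
  -- splitting products over positions
  have split : ∀ f : ℕ → ℝ, (∏ l ∈ Finset.range n, f l)
      = (∏ l ∈ Finset.range j, f l) * ∏ l ∈ Finset.range (n - j), f (j + l) := by
    intro f
    rw [Finset.range_eq_Ico, ← Finset.prod_Ico_consecutive f (Nat.zero_le j) hjn,
      Finset.prod_Ico_eq_prod_range, Finset.prod_Ico_eq_prod_range]
    simp
  have hXsplit : (∏ l ∈ Finset.range n, pr p (fun ω => X l ω = ξ l))
      = (∏ l ∈ Finset.range j, pr p (fun ω => X l ω = extFin j xd a.1 l))
        * ∏ l ∈ Finset.range (n - j),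
            pr p (fun ω => X (j + l) ω = extFin (n - j) xd b.1 l) := by
    rw [split]
    congr 1
    · refine Finset.prod_congr rfl fun l hl => ?_
      rw [Finset.mem_range] at hl
      have e : ξ l = extFin j xd a.1 l := by simp [hξ, extFin, hl]
      rw [e]
    · refine Finset.prod_congr rfl fun l hl => ?_
      rw [Finset.mem_range] at hl
      have hnlt : ¬ (j + l < j) := by omega
      have hsub : j + l - j = l := by omega
      have e : ξ (j + l) = extFin (n - j) xd b.1 l := by
        simp [hξ, extFin, hnlt, hsub, hl]
      rw [e]
  have hRsplit : (∏ i' ∈ Finset.range k, ∏ l ∈ Finset.range n,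
        pr p (fun ω => M.R i' l ω = ρ i' l))
      = (∏ i' ∈ Finset.range k, ∏ l ∈ Finset.range j,
          pr p (fun ω => M.R i' l ω = extFin2 k j rd a.2 i' l))
        * ∏ i' ∈ Finset.range k, ∏ l ∈ Finset.range (n - j),
            pr p (fun ω => M.R i' (j + l) ω = extFin2 k (n - j) rd b.2 i' l) := by
    rw [← Finset.prod_mul_distrib]
    refine Finset.prod_congr rfl fun i' hi' => ?_
    rw [Finset.mem_range] at hi'
    rw [split]
    congr 1
    · refine Finset.prod_congr rfl fun l hl => ?_
      rw [Finset.mem_range] at hl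
      have e : ρ i' l = extFin2 k j rd a.2 i' l := by simp [hρ, extFin2, hi', hl]
      rw [e]
    · refine Finset.prod_congr rfl fun l hl => ?_
      rw [Finset.mem_range] at hl
      have hnlt : ¬ (j + l < j) := by omega
      have hsub : j + l - j = l := by omega
      have e : ρ i' (j + l) = extFin2 k (n - j) rd b.2 i' l := by
        simp [hρ, extFin2, hi', hnlt, hsub, hl]
      rw [e]
  rw [hXsplit, hRsplit]
  beta_reduce
  split_ifs with hc1 hc2 hc3 hc4 hc5 hc6 hc7
  · ring
  · exact absurd hc1.2 hc3
  · exact absurd hc1.1 hc2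
  · exact absurd hc1.1 hc2
  · exact absurd ⟨hc5, hc6⟩ hc1
  · simp
  · simp
  · simp


end MultiPassIC

namespace MultiPassIC

/-- Claim `indep1`: for a `k`-pass streaming algorithm on a product
distribution, for every `j ∈ [n]`:
(i) for every `i ∈ {0,…,k-1}`,
  `I(X_{[1,j]}, R_{(≤k,[1,j])}; X_{[j+1,n]}, R_{(≤k,[j+1,n])} | M_{≤i}, M_{(≤i+1,j)}) = 0`, and
(ii) for every `i ∈ {0,…,k}`,
  `I(X_{[1,j]}, R_{(≤k,[1,j])}; X_{[j+1,n]}, R_{(≤k,[j+1,n])} | M_{≤i}, M_{(≤i,j)}) = 0`.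
(Indices are 0-shifted: the paper's `X_ℓ` is `X (ℓ-1)`, `M_{(i,j)}` is `M.st (i-1) j`,
and `M_r` is `M.passEnd r`.) -/
theorem indep_past_future
    {Ω : Type} [Fintype Ω] {p : Ω → ℝ} {𝒳 : Type} [Fintype 𝒳] {n k : ℕ}
    {X : ℕ → Ω → 𝒳}
    (hp : IsPMF p) (hprod : IsProduct p n X)
    (M : Alg Ω p 𝒳 n k X) :
    ∀ j : ℕ, 1 ≤ j → j ≤ n →
      ((∀ i : ℕ, i < k →
        condMI p
          (fun ω => ((fun r : Fin j => X r.1 ω),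
                     (fun (i' : Fin k) (r : Fin j) => M.R i'.1 r.1 ω)))
          (fun ω => ((fun r : Fin (n - j) => X (j + r.1) ω),
                     (fun (i' : Fin k) (r : Fin (n - j)) => M.R i'.1 (j + r.1) ω)))
          (fun ω => ((fun r : Fin (i + 1) => M.passEnd r.1 ω),
                     (fun r : Fin (i + 1) => M.st r.1 j ω))) = 0)
      ∧ (∀ i : ℕ, i ≤ k →
        condMI p
          (fun ω => ((fun r : Fin j => X r.1 ω),
                     (fun (i' : Fin k) (r : Fin j) => M.R i'.1 r.1 ω)))
          (fun ω => ((fun r : Fin (n - j) => X (j + r.1) ω),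
                     (fun (i' : Fin k) (r : Fin (n - j)) => M.R i'.1 (j + r.1) ω)))
          (fun ω => ((fun r : Fin (i + 1) => M.passEnd r.1 ω),
                     (fun r : Fin i => M.st r.1 j ω))) = 0)) := by
  intro j hj1 hjn
  constructor
  · intro i hik
    exact indep_key hp hprod M j hj1 hjn (i + 1) (i + 1) (Nat.succ_pos i) le_rfl
      (Nat.le_succ _) hik
  · intro i hik
    exact indep_key hp hprod M j hj1 hjn (i + 1) i (Nat.succ_pos i) (Nat.le_succ i)
      le_rfl hik

end MultiPassIC
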